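/- arXiv:1503.03648 — 2 statements merged into one kernel-verified Lean document; each statement's English description precedes it below -/
import Mathlib

section
/- Let 0 < ρ < 1 and let u : Ā_ρ → ℂ be continuously differentiable on the closed annulus with |u(z)| = 1 for all z ∈ ∂A_ρ; set p = deg(u, C₁) and q = deg(u, C_ρ). Then the Dirichlet energy satisfies E(u) ≥ π|p − q|. Moreover, if u is holomorphic on A_ρ then E(u) = π(p − q); conversely, if p ≥ q and E(u) = π(p − q), then u is holomorphic on A_ρ. -/
open Complex MeasureTheory

noncomputable section

/-- Partial derivative in the `x`-direction (as a function of `z = x + iy`). -/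
def pdx (u : ℂ → ℂ) (z : ℂ) : ℂ := fderiv ℝ u z 1

/-- Partial derivative in the `y`-direction. -/
def pdy (u : ℂ → ℂ) (z : ℂ) : ℂ := fderiv ℝ u z Complex.I

/-- Wirtinger derivative `∂_z u = (1/2)(∂ₓu − i ∂_y u)`. -/
def wirt (u : ℂ → ℂ) (z : ℂ) : ℂ := (1 / 2) * (pdx u z - Complex.I * pdy u z)

/-- Hopf differential coefficient `H_u(z) = ∂_z u · ∂_z ū`. -/
def hopf (u : ℂ → ℂ) (z : ℂ) : ℂ :=
  wirt u z * wirt (fun w => (starRingEnd ℂ) (u w)) z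

/-- Open annulus `A_ρ = {ρ < |z| < 1}`. -/
def ann (ρ : ℝ) : Set ℂ := {z : ℂ | ρ < ‖z‖ ∧ ‖z‖ < 1}

/-- Closed annulus `Ā_ρ = {ρ ≤ |z| ≤ 1}`. -/
def cann (ρ : ℝ) : Set ℂ := {z : ℂ | ρ ≤ ‖z‖ ∧ ‖z‖ ≤ 1}

/-- Boundary `∂A_ρ`, the union of the circles `|z| = 1` and `|z| = ρ`. -/
def bdry (ρ : ℝ) : Set ℂ := {z : ℂ | ‖z‖ = 1 ∨ ‖z‖ = ρ}

/-- Wedge product `a ∧ b = Re a · Im b − Im a · Re b`. -/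
def wedge (a b : ℂ) : ℝ := a.re * b.im - a.im * b.re

/-- Radial derivative `∂_r u(z)`, the directional derivative in direction `z/|z|`. -/
def rderiv (u : ℂ → ℂ) (z : ℂ) : ℂ := fderiv ℝ u z (z / (‖z‖ : ℂ))

/-- Degree of `u` on the circle `|z| = r`:
`deg(u, C_r) = (1/2π) ∫₀^{2π} u(re^{iθ}) ∧ ∂_θ[u(re^{iθ})] dθ`. -/
def degCirc (u : ℂ → ℂ) (r : ℝ) : ℝ :=
  (1 / (2 * Real.pi)) * ∫ θ in (0:ℝ)..(2 * Real.pi),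
    wedge (u ((r : ℂ) * Complex.exp (Complex.I * θ)))
      (deriv (fun t : ℝ => u ((r : ℂ) * Complex.exp (Complex.I * t))) θ)

/-- Dirichlet energy `E(u) = (1/2) ∫_{A_ρ} (|∂ₓu|² + |∂_y u|²)`. -/
def energy (ρ : ℝ) (u : ℂ → ℂ) : ℝ :=
  (1 / 2) * ∫ z in ann ρ, (‖pdx u z‖ ^ 2 + ‖pdy u z‖ ^ 2)

end

noncomputable section Helpers

open Complex MeasureTheory Set intervalIntegral

variable {ρ : ℝ}

lemma ann_open : IsOpen (ann ρ) := by
  have : ann ρ = (norm ⁻¹' (Set.Ioi ρ)) ∩ (norm ⁻¹' (Set.Iio 1)) := rfl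
  rw [this]
  exact ((isOpen_Ioi.preimage continuous_norm).inter
    (isOpen_Iio.preimage continuous_norm))

lemma ann_subset_cann : ann ρ ⊆ cann ρ := fun z hz => ⟨le_of_lt hz.1, le_of_lt hz.2⟩

lemma cann_mem_nhds {z : ℂ} (hz : z ∈ ann ρ) : cann ρ ∈ nhds z :=
  Filter.mem_of_superset (ann_open.mem_nhds hz) ann_subset_cann

lemma isCompact_cann (hρ0 : 0 < ρ) : IsCompact (cann ρ) := by
  have hb : IsCompact (Metric.closedBall (0:ℂ) 1) := isCompact_closedBall _ _
  apply hb.of_isClosed_subset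
  · have : cann ρ = (norm ⁻¹' (Set.Ici ρ)) ∩ (norm ⁻¹' (Set.Iic 1)) := rfl
    rw [this]
    exact (isClosed_Ici.preimage continuous_norm).inter
      (isClosed_Iic.preimage continuous_norm)
  · intro z hz
    simpa [Metric.mem_closedBall, Complex.dist_eq] using hz.2

lemma uniqueDiffOn_cann (hρ0 : 0 < ρ) (hρ1 : ρ < 1) : UniqueDiffOn ℝ (cann ρ) := by
  intro z hz
  have hzabs : 0 < ‖z‖ := lt_of_lt_of_le hρ0 hz.1
  have hz0 : z ≠ 0 := by simpa using hzabs.ne'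
  set S : Set ℂ := Metric.closedBall (0:ℂ) 1 ∩ {w : ℂ | ρ * ‖z‖ ≤ (w * (starRingEnd ℂ) z).re} with hS
  have hlin : IsLinearMap ℝ (fun w : ℂ => (w * (starRingEnd ℂ) z).re) := by
    constructor
    · intro a b; simp [add_mul]
    · intro c a; simp [smul_eq_mul, mul_assoc]
  have hconv : Convex ℝ S :=
    (convex_closedBall _ _).inter (convex_halfSpace_ge hlin _)
  have hsub : S ⊆ cann ρ := by
    rintro w ⟨hw1, hw2⟩
    constructor
    · have h1 : (w * (starRingEnd ℂ) z).re ≤ ‖w‖ * ‖z‖ := by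
        calc (w * (starRingEnd ℂ) z).re ≤ ‖w * (starRingEnd ℂ) z‖ := Complex.re_le_norm _
        _ = ‖w‖ * ‖z‖ := by simp [map_mul]
      have := le_trans hw2 h1
      exact le_of_mul_le_mul_right (by linarith) hzabs
    · simpa [Metric.mem_closedBall, Complex.dist_eq] using hw1
  have hmemS : z ∈ S := by
    refine ⟨by simpa [Metric.mem_closedBall, Complex.dist_eq] using hz.2, ?_⟩
    have : (z * (starRingEnd ℂ) z).re = ‖z‖ * ‖z‖ := by
      rw [Complex.mul_conj]
      simp [Complex.normSq_eq_norm_sq, sq]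
    simp only [Set.mem_setOf_eq, this]
    exact mul_le_mul_of_nonneg_right hz.1 hzabs.le
  have hint : (interior S).Nonempty := by
    set t : ℝ := (ρ + 1) / 2 with ht
    have htρ : ρ < t := by linarith
    have ht1 : t < 1 := by linarith
    have ht0 : 0 < t := lt_trans hρ0 htρ
    refine ⟨(t / ‖z‖ : ℝ) * z, ?_⟩
    have hopen : IsOpen (Metric.ball (0:ℂ) 1 ∩ {w : ℂ | ρ * ‖z‖ < (w * (starRingEnd ℂ) z).re}) := by
      apply Metric.isOpen_ball.inter
      have : Continuous (fun w : ℂ => (w * (starRingEnd ℂ) z).re) := by continuity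
      exact isOpen_lt continuous_const this
    apply interior_mono (s := Metric.ball (0:ℂ) 1 ∩ {w : ℂ | ρ * ‖z‖ < (w * (starRingEnd ℂ) z).re})
    · rintro w ⟨h1, h2⟩
      refine ⟨Metric.ball_subset_closedBall h1, ?_⟩
      have h2' : ρ * ‖z‖ < (w * (starRingEnd ℂ) z).re := h2
      exact le_of_lt h2'
    rw [hopen.interior_eq]
    constructor
    · simp only [Metric.mem_ball, Complex.dist_eq, sub_zero]
      rw [norm_mul]
      simp only [Complex.norm_real, Real.norm_eq_abs]
      rw [abs_of_pos (by positivity)]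
      rw [div_mul_cancel₀ _ hzabs.ne']
      exact ht1
    · simp only [Set.mem_setOf_eq]
      have : ((t / ‖z‖ : ℝ) * z * (starRingEnd ℂ) z).re
          = t / ‖z‖ * (‖z‖ * ‖z‖) := by
        rw [mul_assoc, Complex.mul_conj]
        simp [Complex.normSq_eq_norm_sq, sq, Complex.ofReal_mul]
      rw [this]
      rw [div_mul_eq_mul_div, mul_comm (‖z‖) (‖z‖)]
      rw [show t * (‖z‖ * ‖z‖) / ‖z‖ = t * ‖z‖ by
        field_simp]
      exact mul_lt_mul_of_pos_right htρ hzabs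
  exact (uniqueDiffWithinAt_convex hconv hint (subset_closure hmemS)).mono hsub

/-! ### Derivative infrastructure -/

def Gd (ρ : ℝ) (u : ℂ → ℂ) (z : ℂ) : ℂ →L[ℝ] ℂ := fderivWithin ℝ u (cann ρ) z

def crv (r θ : ℝ) : ℂ := (r : ℂ) * Complex.exp (Complex.I * θ)

lemma crv_abs {r : ℝ} (hr : 0 ≤ r) (θ : ℝ) : ‖crv r θ‖ = r := by
  rw [crv, norm_mul, Complex.norm_real, Real.norm_eq_abs, _root_.abs_of_nonneg hr, mul_comm Complex.I,
    Complex.norm_exp_ofReal_mul_I, mul_one]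

lemma crv_mem_cann {r : ℝ} (hρ0 : 0 < ρ) (hr : r ∈ Icc ρ 1) (θ : ℝ) : crv r θ ∈ cann ρ := by
  have := crv_abs (le_trans hρ0.le hr.1) θ
  exact ⟨by rw [this]; exact hr.1, by rw [this]; exact hr.2⟩

lemma continuous_crv : Continuous (fun p : ℝ × ℝ => crv p.1 p.2) := by
  unfold crv; continuity

lemma hasDerivAt_crv_theta (r θ : ℝ) :
    HasDerivAt (fun t : ℝ => crv r t) (Complex.I * crv r θ) θ := by
  have h1 : HasDerivAt (fun t : ℝ => Complex.I * (t : ℂ)) Complex.I θ := by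
    simpa using (Complex.ofRealCLM.hasDerivAt (x := θ)).const_mul Complex.I
  have h2 := (h1.cexp).const_mul (r : ℂ)
  simp only [crv]
  exact h2.congr_deriv (by ring)

lemma hasDerivAt_crv_r (r θ : ℝ) :
    HasDerivAt (fun s : ℝ => crv s θ) (Complex.exp (Complex.I * θ)) r := by
  have h1 : HasDerivAt (fun s : ℝ => (s : ℂ)) 1 r := Complex.ofRealCLM.hasDerivAt
  have := h1.mul_const (Complex.exp (Complex.I * θ))
  simpa [crv] using this

variable {u : ℂ → ℂ}

lemma hGd_has (hreg : ContDiffOn ℝ 1 u (cann ρ)) {z : ℂ} (hz : z ∈ cann ρ) :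
    HasFDerivWithinAt u (Gd ρ u z) (cann ρ) z :=
  ((hreg z hz).differentiableWithinAt one_ne_zero).hasFDerivWithinAt

lemma hGd_cont (hρ0 : 0 < ρ) (hρ1 : ρ < 1) (hreg : ContDiffOn ℝ 1 u (cann ρ)) :
    ContinuousOn (Gd ρ u) (cann ρ) :=
  hreg.continuousOn_fderivWithin (uniqueDiffOn_cann hρ0 hρ1) le_rfl

lemma hGd_eq_fderiv (hreg : ContDiffOn ℝ 1 u (cann ρ)) {z : ℂ} (hz : z ∈ ann ρ) :
    Gd ρ u z = fderiv ℝ u z :=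
  fderivWithin_of_mem_nhds (cann_mem_nhds hz)

lemma hasFDerivAt_interior (hreg : ContDiffOn ℝ 1 u (cann ρ)) {z : ℂ} (hz : z ∈ ann ρ) :
    HasFDerivAt u (Gd ρ u z) z :=
  (hGd_has hreg (ann_subset_cann hz)).hasFDerivAt (cann_mem_nhds hz)

/-- angular derivative -/
lemma hasDerivAt_theta (hρ0 : 0 < ρ) (hreg : ContDiffOn ℝ 1 u (cann ρ)) {r : ℝ}
    (hr : r ∈ Icc ρ 1) (θ : ℝ) :
    HasDerivAt (fun t : ℝ => u (crv r t)) (Gd ρ u (crv r θ) (Complex.I * crv r θ)) θ := by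
  have hl : HasFDerivWithinAt u (Gd ρ u (crv r θ)) (cann ρ) (crv r θ) :=
    hGd_has hreg (crv_mem_cann hρ0 hr θ)
  have := hl.comp_hasDerivWithinAt (s := (univ : Set ℝ)) θ
    (hasDerivAt_crv_theta r θ).hasDerivWithinAt (fun t _ => crv_mem_cann hρ0 hr t)
  exact hasDerivWithinAt_univ.mp this

/-- radial derivative, at interior radii -/
lemma hasDerivAt_r (hρ0 : 0 < ρ) (hreg : ContDiffOn ℝ 1 u (cann ρ)) {r : ℝ}
    (hr : r ∈ Ioo ρ 1) (θ : ℝ) :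
    HasDerivAt (fun s : ℝ => u (crv s θ)) (Gd ρ u (crv r θ) (Complex.exp (Complex.I * θ))) r := by
  have hz : crv r θ ∈ ann ρ := by
    have := crv_abs (le_trans hρ0.le hr.1.le) θ
    exact ⟨by rw [this]; exact hr.1, by rw [this]; exact hr.2⟩
  have hl : HasFDerivAt u (Gd ρ u (crv r θ)) (crv r θ) := hasFDerivAt_interior hreg hz
  exact hl.comp_hasDerivAt r (hasDerivAt_crv_r r θ)

/-! ### wedge algebra -/

lemma wedge_add_left (a b c : ℂ) : wedge (a + b) c = wedge a c + wedge b c := by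
  simp [wedge]; ring

lemma wedge_add_right (a b c : ℂ) : wedge a (b + c) = wedge a b + wedge a c := by
  simp [wedge]; ring

lemma wedge_sub_left (a b c : ℂ) : wedge (a - b) c = wedge a c - wedge b c := by
  simp [wedge]; ring

lemma wedge_smul_left (t : ℝ) (a b : ℂ) : wedge (t • a) b = t * wedge a b := by
  simp [wedge, Complex.smul_re, Complex.smul_im]; ring

lemma wedge_smul_right (t : ℝ) (a b : ℂ) : wedge a (t • b) = t * wedge a b := by
  simp [wedge, Complex.smul_re, Complex.smul_im]; ring

lemma wedge_antisymm (a b : ℂ) : wedge a b = - wedge b a := by simp [wedge]; ring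

lemma abs_wedge_le (a b : ℂ) : |wedge a b| ≤ 2 * ‖a‖ * ‖b‖ := by
  have h1 : |a.re| ≤ ‖a‖ := Complex.abs_re_le_norm a
  have h2 : |a.im| ≤ ‖a‖ := Complex.abs_im_le_norm a
  have h3 : |b.re| ≤ ‖b‖ := Complex.abs_re_le_norm b
  have h4 : |b.im| ≤ ‖b‖ := Complex.abs_im_le_norm b
  have h0a := norm_nonneg a
  have h0b := norm_nonneg b
  have := abs_sub (a.re * b.im) (a.im * b.re)
  calc |wedge a b| ≤ |a.re * b.im| + |a.im * b.re| := abs_sub _ _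
  _ = |a.re| * |b.im| + |a.im| * |b.re| := by rw [abs_mul, abs_mul]
  _ ≤ ‖a‖ * ‖b‖ + ‖a‖ * ‖b‖ :=
      add_le_add (mul_le_mul h1 h4 (abs_nonneg _) h0a) (mul_le_mul h2 h3 (abs_nonneg _) h0a)
  _ = 2 * ‖a‖ * ‖b‖ := by ring

lemma continuous_wedge : Continuous (fun p : ℂ × ℂ => wedge p.1 p.2) := by
  unfold wedge
  exact ((Complex.continuous_re.comp continuous_fst).mul
    (Complex.continuous_im.comp continuous_snd)).sub
    ((Complex.continuous_im.comp continuous_fst).mul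
    (Complex.continuous_re.comp continuous_snd))

lemma hasDerivAt_wedge {f h : ℝ → ℂ} {f' h' : ℂ} {t : ℝ}
    (hf : HasDerivAt f f' t) (hh : HasDerivAt h h' t) :
    HasDerivAt (fun s => wedge (f s) (h s)) (wedge f' (h t) + wedge (f t) h') t := by
  have hfre : HasDerivAt (fun s => (f s).re) f'.re t :=
    (Complex.reCLM.hasFDerivAt.comp_hasDerivAt t hf)
  have hfim : HasDerivAt (fun s => (f s).im) f'.im t :=
    (Complex.imCLM.hasFDerivAt.comp_hasDerivAt t hf)
  have hhre : HasDerivAt (fun s => (h s).re) h'.re t :=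
    (Complex.reCLM.hasFDerivAt.comp_hasDerivAt t hh)
  have hhim : HasDerivAt (fun s => (h s).im) h'.im t :=
    (Complex.imCLM.hasFDerivAt.comp_hasDerivAt t hh)
  have h5 := (hfre.mul hhim).sub (hfim.mul hhre)
  simp only [wedge]
  exact h5.congr_deriv (by ring)

lemma exp_I_decomp (θ : ℝ) : Complex.exp (Complex.I * θ) =
    Real.cos θ • (1 : ℂ) + Real.sin θ • Complex.I := by
  rw [mul_comm, Complex.exp_mul_I]
  simp [Complex.ofReal_cos, Complex.ofReal_sin, Complex.real_smul]

lemma I_exp_I_decomp (θ : ℝ) : Complex.I * Complex.exp (Complex.I * θ) =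
    (-Real.sin θ) • (1 : ℂ) + Real.cos θ • Complex.I := by
  rw [exp_I_decomp]
  push_cast [Complex.real_smul]
  ring_nf
  simp [Complex.I_sq]
  ring

lemma wedge_rot (L : ℂ →L[ℝ] ℂ) (θ : ℝ) :
    wedge (L (Complex.exp (Complex.I * θ))) (L (Complex.I * Complex.exp (Complex.I * θ)))
      = wedge (L 1) (L Complex.I) := by
  rw [I_exp_I_decomp, exp_I_decomp, map_add, map_add, _root_.map_smul, _root_.map_smul, _root_.map_smul, _root_.map_smul]
  simp only [wedge_add_left, wedge_add_right, wedge_smul_left, wedge_smul_right]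
  have h1 : wedge (L 1) (L 1) = 0 := by simp [wedge]; ring
  have h2 : wedge (L Complex.I) (L Complex.I) = 0 := by simp [wedge]; ring
  have h3 : wedge (L Complex.I) (L 1) = - wedge (L 1) (L Complex.I) := wedge_antisymm _ _
  rw [h1, h2, h3]
  linear_combination (Real.sin_sq_add_cos_sq θ) * wedge (L 1) (L Complex.I)

/-! ### The functions V, R, W, psi, chi -/

def Vf (ρ : ℝ) (u : ℂ → ℂ) (r θ : ℝ) : ℂ := Gd ρ u (crv r θ) (Complex.I * crv r θ)
def Rf (ρ : ℝ) (u : ℂ → ℂ) (r θ : ℝ) : ℂ := Gd ρ u (crv r θ) (Complex.exp (Complex.I * θ))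
def Wf (ρ : ℝ) (u : ℂ → ℂ) (r θ : ℝ) : ℝ := wedge (u (crv r θ)) (Vf ρ u r θ)
def psiF (ρ : ℝ) (u : ℂ → ℂ) (r : ℝ) : ℝ := ∫ θ in (0:ℝ)..(2 * Real.pi), Wf ρ u r θ
def chiF (ρ : ℝ) (u : ℂ → ℂ) (r : ℝ) : ℝ :=
  ∫ θ in (0:ℝ)..(2 * Real.pi), wedge (Rf ρ u r θ) (Vf ρ u r θ)

lemma crv_periodic (r θ : ℝ) : crv r (θ + 2 * Real.pi) = crv r θ := by
  simp only [crv]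
  congr 1
  push_cast
  rw [mul_add]
  rw [Complex.exp_add]
  have : Complex.I * (2 * Real.pi) = 2 * Real.pi * Complex.I := by ring
  rw [this, Complex.exp_two_pi_mul_I, mul_one]

section ContLemmas

lemma contOn_Gcrv (hρ0 : 0 < ρ) (hρ1 : ρ < 1) (hreg : ContDiffOn ℝ 1 u (cann ρ)) :
    ContinuousOn (fun p : ℝ × ℝ => Gd ρ u (crv p.1 p.2)) (Icc ρ 1 ×ˢ (univ : Set ℝ)) := by
  apply (hGd_cont hρ0 hρ1 hreg).comp continuous_crv.continuousOn
  rintro ⟨r, θ⟩ ⟨hr, -⟩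
  exact crv_mem_cann hρ0 hr θ

lemma contOn_ucrv (hρ0 : 0 < ρ) (hreg : ContDiffOn ℝ 1 u (cann ρ)) :
    ContinuousOn (fun p : ℝ × ℝ => u (crv p.1 p.2)) (Icc ρ 1 ×ˢ (univ : Set ℝ)) := by
  apply hreg.continuousOn.comp continuous_crv.continuousOn
  rintro ⟨r, θ⟩ ⟨hr, -⟩
  exact crv_mem_cann hρ0 hr θ

lemma contOn_Vf (hρ0 : 0 < ρ) (hρ1 : ρ < 1) (hreg : ContDiffOn ℝ 1 u (cann ρ)) :
    ContinuousOn (fun p : ℝ × ℝ => Vf ρ u p.1 p.2) (Icc ρ 1 ×ˢ (univ : Set ℝ)) := by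
  apply ContinuousOn.clm_apply (contOn_Gcrv hρ0 hρ1 hreg)
  exact (continuous_const.mul continuous_crv).continuousOn

lemma contOn_Rf (hρ0 : 0 < ρ) (hρ1 : ρ < 1) (hreg : ContDiffOn ℝ 1 u (cann ρ)) :
    ContinuousOn (fun p : ℝ × ℝ => Rf ρ u p.1 p.2) (Icc ρ 1 ×ˢ (univ : Set ℝ)) := by
  apply ContinuousOn.clm_apply (contOn_Gcrv hρ0 hρ1 hreg)
  apply Continuous.continuousOn
  continuity

lemma contOn_Wf (hρ0 : 0 < ρ) (hρ1 : ρ < 1) (hreg : ContDiffOn ℝ 1 u (cann ρ)) :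
    ContinuousOn (fun p : ℝ × ℝ => Wf ρ u p.1 p.2) (Icc ρ 1 ×ˢ (univ : Set ℝ)) := by
  exact continuous_wedge.comp_continuousOn
    ((contOn_ucrv hρ0 hreg).prodMk (contOn_Vf hρ0 hρ1 hreg))

/-- a bound for everything -/
lemma exists_bound (hρ0 : 0 < ρ) (hρ1 : ρ < 1) (hreg : ContDiffOn ℝ 1 u (cann ρ)) :
    ∃ M : ℝ, 0 ≤ M ∧ (∀ z ∈ cann ρ, ‖Gd ρ u z‖ ≤ M) ∧ (∀ z ∈ cann ρ, ‖u z‖ ≤ M) := by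
  obtain ⟨C, hC⟩ := (isCompact_cann hρ0).exists_bound_of_continuousOn (hGd_cont hρ0 hρ1 hreg)
  obtain ⟨D, hD⟩ := (isCompact_cann hρ0).exists_bound_of_continuousOn hreg.continuousOn
  refine ⟨max 0 (max C D), le_max_left _ _, fun z hz => ?_, fun z hz => ?_⟩
  · exact le_trans (hC z hz) (le_trans (le_max_left _ _) (le_max_right _ _))
  · exact le_trans (hD z hz) (le_trans (le_max_right _ _) (le_max_right _ _))

lemma Vf_bound (hρ0 : 0 < ρ) {M : ℝ} (hM : ∀ z ∈ cann ρ, ‖Gd ρ u z‖ ≤ M) {r : ℝ}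
    (hr : r ∈ Icc ρ 1) (θ : ℝ) : ‖Vf ρ u r θ‖ ≤ M := by
  have hz := crv_mem_cann hρ0 hr θ
  calc ‖Vf ρ u r θ‖ ≤ ‖Gd ρ u (crv r θ)‖ * ‖Complex.I * crv r θ‖ :=
        (Gd ρ u (crv r θ)).le_opNorm _
  _ ≤ M * 1 := by
      apply mul_le_mul (hM _ hz) ?_ (norm_nonneg _)
        (le_trans (norm_nonneg _) (hM _ hz))
      rw [norm_mul]
      simp only [Complex.norm_I, one_mul]
      exact hz.2
  _ = M := mul_one M

lemma Rf_bound (hρ0 : 0 < ρ) {M : ℝ} (hM : ∀ z ∈ cann ρ, ‖Gd ρ u z‖ ≤ M) {r : ℝ}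
    (hr : r ∈ Icc ρ 1) (θ : ℝ) : ‖Rf ρ u r θ‖ ≤ M := by
  have hz := crv_mem_cann hρ0 hr θ
  calc ‖Rf ρ u r θ‖ ≤ ‖Gd ρ u (crv r θ)‖ * ‖Complex.exp (Complex.I * θ)‖ :=
        (Gd ρ u (crv r θ)).le_opNorm _
  _ ≤ M * 1 := by
      apply mul_le_mul (hM _ hz) ?_ (norm_nonneg _)
        (le_trans (norm_nonneg _) (hM _ hz))
      rw [mul_comm Complex.I, Complex.norm_exp_ofReal_mul_I]
  _ = M := mul_one M

/-- the degree as an integral of `Wf` -/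
lemma degCirc_eq (hρ0 : 0 < ρ) (hreg : ContDiffOn ℝ 1 u (cann ρ)) {r : ℝ} (hr : r ∈ Icc ρ 1) :
    degCirc u r = (1 / (2 * Real.pi)) * psiF ρ u r := by
  unfold degCirc psiF Wf Vf
  congr 1
  apply intervalIntegral.integral_congr
  intro θ _
  show wedge (u (crv r θ)) (deriv (fun t => u (crv r t)) θ)
      = wedge (u (crv r θ)) (Gd ρ u (crv r θ) (Complex.I * crv r θ))
  rw [(hasDerivAt_theta hρ0 hreg hr θ).deriv]

end ContLemmas

section Slices

lemma cont_Vf_theta (hρ0 : 0 < ρ) (hρ1 : ρ < 1) (hreg : ContDiffOn ℝ 1 u (cann ρ))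
    {r : ℝ} (hr : r ∈ Icc ρ 1) : Continuous (fun θ => Vf ρ u r θ) := by
  rw [← continuousOn_univ]
  exact (contOn_Vf hρ0 hρ1 hreg).comp
    (Continuous.continuousOn (by continuity : Continuous (fun θ : ℝ => (r, θ))))
    (fun θ _ => ⟨hr, mem_univ θ⟩)

lemma cont_Rf_theta (hρ0 : 0 < ρ) (hρ1 : ρ < 1) (hreg : ContDiffOn ℝ 1 u (cann ρ))
    {r : ℝ} (hr : r ∈ Icc ρ 1) : Continuous (fun θ => Rf ρ u r θ) := by
  rw [← continuousOn_univ]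
  exact (contOn_Rf hρ0 hρ1 hreg).comp
    (Continuous.continuousOn (by continuity : Continuous (fun θ : ℝ => (r, θ))))
    (fun θ _ => ⟨hr, mem_univ θ⟩)

lemma cont_ucrv_theta (hρ0 : 0 < ρ) (hreg : ContDiffOn ℝ 1 u (cann ρ))
    {r : ℝ} (hr : r ∈ Icc ρ 1) : Continuous (fun θ => u (crv r θ)) := by
  rw [← continuousOn_univ]
  exact (contOn_ucrv hρ0 hreg).comp
    (Continuous.continuousOn (by continuity : Continuous (fun θ : ℝ => (r, θ))))
    (fun θ _ => ⟨hr, mem_univ θ⟩)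

lemma cont_Wf_theta (hρ0 : 0 < ρ) (hρ1 : ρ < 1) (hreg : ContDiffOn ℝ 1 u (cann ρ))
    {r : ℝ} (hr : r ∈ Icc ρ 1) : Continuous (fun θ => Wf ρ u r θ) := by
  unfold Wf
  exact continuous_wedge.comp
    ((cont_ucrv_theta hρ0 hreg hr).prodMk (cont_Vf_theta hρ0 hρ1 hreg hr))

end Slices

/-- the fundamental difference identity, via integration by parts in `θ` -/
lemma psi_diff (hρ0 : 0 < ρ) (hρ1 : ρ < 1) (hreg : ContDiffOn ℝ 1 u (cann ρ))
    {r s : ℝ} (hr : r ∈ Icc ρ 1) (hs : s ∈ Icc ρ 1) :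
    psiF ρ u s - psiF ρ u r = ∫ θ in (0:ℝ)..(2 * Real.pi),
      wedge (u (crv s θ) - u (crv r θ)) (Vf ρ u s θ + Vf ρ u r θ) := by
  set F : ℝ → ℝ := fun θ => wedge (u (crv s θ)) (u (crv r θ)) with hF
  set F' : ℝ → ℝ := fun θ =>
    wedge (Vf ρ u s θ) (u (crv r θ)) + wedge (u (crv s θ)) (Vf ρ u r θ) with hF'
  have hder : ∀ θ : ℝ, HasDerivAt F (F' θ) θ := fun θ =>
    hasDerivAt_wedge (hasDerivAt_theta hρ0 hreg hs θ) (hasDerivAt_theta hρ0 hreg hr θ)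
  have hcontF' : Continuous F' := by
    apply Continuous.add
    · exact continuous_wedge.comp
        ((cont_Vf_theta hρ0 hρ1 hreg hs).prodMk (cont_ucrv_theta hρ0 hreg hr))
    · exact continuous_wedge.comp
        ((cont_ucrv_theta hρ0 hreg hs).prodMk (cont_Vf_theta hρ0 hρ1 hreg hr))
  have hFTC : ∫ θ in (0:ℝ)..(2 * Real.pi), F' θ = F (2 * Real.pi) - F 0 :=
    intervalIntegral.integral_eq_sub_of_hasDerivAt (fun θ _ => hder θ)
      (hcontF'.intervalIntegrable _ _)
  have hper : F (2 * Real.pi) = F 0 := by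
    have h1 : crv s (2 * Real.pi) = crv s 0 := by
      have := crv_periodic s 0; simpa using this
    have h2 : crv r (2 * Real.pi) = crv r 0 := by
      have := crv_periodic r 0; simpa using this
    simp only [hF, h1, h2]
  have hzero : ∫ θ in (0:ℝ)..(2 * Real.pi), F' θ = 0 := by rw [hFTC, hper, sub_self]
  have hWs : IntervalIntegrable (fun θ => Wf ρ u s θ) volume 0 (2 * Real.pi) :=
    (cont_Wf_theta hρ0 hρ1 hreg hs).intervalIntegrable _ _
  have hWr : IntervalIntegrable (fun θ => Wf ρ u r θ) volume 0 (2 * Real.pi) :=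
    (cont_Wf_theta hρ0 hρ1 hreg hr).intervalIntegrable _ _
  have key : ∀ θ : ℝ, Wf ρ u s θ - Wf ρ u r θ =
      wedge (u (crv s θ) - u (crv r θ)) (Vf ρ u s θ + Vf ρ u r θ) - F' θ := by
    intro θ
    simp only [Wf, hF', wedge, Complex.sub_re, Complex.sub_im, Complex.add_re, Complex.add_im]
    ring
  have : psiF ρ u s - psiF ρ u r = ∫ θ in (0:ℝ)..(2 * Real.pi),
      (wedge (u (crv s θ) - u (crv r θ)) (Vf ρ u s θ + Vf ρ u r θ) - F' θ) := by
    rw [psiF, psiF, ← intervalIntegral.integral_sub hWs hWr]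
    apply intervalIntegral.integral_congr
    intro θ _
    exact key θ
  rw [this]
  have hcontBig : Continuous (fun θ =>
      wedge (u (crv s θ) - u (crv r θ)) (Vf ρ u s θ + Vf ρ u r θ)) := by
    exact continuous_wedge.comp
      (((cont_ucrv_theta hρ0 hreg hs).sub (cont_ucrv_theta hρ0 hreg hr)).prodMk
        ((cont_Vf_theta hρ0 hρ1 hreg hs).add (cont_Vf_theta hρ0 hρ1 hreg hr)))
  rw [intervalIntegral.integral_sub (hcontBig.intervalIntegrable _ _)
    (hcontF'.intervalIntegrable _ _), hzero, sub_zero]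

lemma slope_bound (hρ0 : 0 < ρ) (hreg : ContDiffOn ℝ 1 u (cann ρ)) {M : ℝ}
    (hM : ∀ z ∈ cann ρ, ‖Gd ρ u z‖ ≤ M) {r s : ℝ} (hr : r ∈ Icc ρ 1) (hs : s ∈ Icc ρ 1)
    (θ : ℝ) : ‖u (crv s θ) - u (crv r θ)‖ ≤ M * |s - r| := by
  set seg := segment ℝ (crv r θ) (crv s θ) with hseg
  have hseg_sub : seg ⊆ cann ρ := by
    intro x hx
    rw [hseg, segment_eq_image] at hx
    obtain ⟨t, ht, rfl⟩ := hx
    have hx' : (1 - t) • crv r θ + t • crv s θ = crv ((1 - t) * r + t * s) θ := by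
      simp only [crv, Complex.real_smul]
      push_cast
      ring
    show (1 - t) • crv r θ + t • crv s θ ∈ cann ρ
    rw [hx']
    apply crv_mem_cann hρ0
    constructor
    · nlinarith [hr.1, hs.1, ht.1, ht.2]
    · nlinarith [hr.2, hs.2, ht.1, ht.2]
  have hmvt := Convex.norm_image_sub_le_of_norm_hasFDerivWithin_le (f := u) (f' := Gd ρ u)
    (s := seg) (fun x hx => (hGd_has hreg (hseg_sub hx)).mono hseg_sub)
    (fun x hx => hM x (hseg_sub hx)) (convex_segment _ _)
    (left_mem_segment ℝ _ _) (right_mem_segment ℝ _ _)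
  calc ‖u (crv s θ) - u (crv r θ)‖ ≤ M * ‖crv s θ - crv r θ‖ := hmvt
  _ = M * |s - r| := by
      congr 1
      have hd : crv s θ - crv r θ = ((s - r : ℝ) : ℂ) * Complex.exp (Complex.I * θ) := by
        simp only [crv]
        push_cast
        ring
      rw [hd, norm_mul]
      simp only [Complex.norm_real, Real.norm_eq_abs]
      rw [mul_comm Complex.I, Complex.norm_exp_ofReal_mul_I, mul_one]

lemma hasDerivAt_psiF (hρ0 : 0 < ρ) (hρ1 : ρ < 1) (hreg : ContDiffOn ℝ 1 u (cann ρ))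
    {r : ℝ} (hr : r ∈ Ioo ρ 1) :
    HasDerivAt (psiF ρ u) (∫ θ in (0:ℝ)..(2 * Real.pi),
      wedge (Rf ρ u r θ) (Vf ρ u r θ + Vf ρ u r θ)) r := by
  obtain ⟨M, hM0, hMG, hMu⟩ := exists_bound hρ0 hρ1 hreg
  have hrIcc : r ∈ Icc ρ 1 := ⟨hr.1.le, hr.2.le⟩
  rw [hasDerivAt_iff_tendsto_slope]
  have hIoo_mem : Ioo ρ 1 ∈ nhds r := isOpen_Ioo.mem_nhds hr
  rw [nhdsWithin_restrict' _ hIoo_mem]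
  set l := nhdsWithin r ({r}ᶜ ∩ Ioo ρ 1) with hl
  have hmem : ∀ᶠ s in l, s ∈ ({r}ᶜ ∩ Ioo ρ 1) := self_mem_nhdsWithin
  have heq : ∀ᶠ s in l, slope (psiF ρ u) r s = ∫ θ in (0:ℝ)..(2 * Real.pi),
      wedge ((s - r)⁻¹ • (u (crv s θ) - u (crv r θ))) (Vf ρ u s θ + Vf ρ u r θ) := by
    filter_upwards [hmem] with s hs
    rcases hs with ⟨hne, hsIoo⟩
    have hsIcc : s ∈ Icc ρ 1 := ⟨hsIoo.1.le, hsIoo.2.le⟩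
    have : slope (psiF ρ u) r s = (s - r)⁻¹ • (psiF ρ u s - psiF ρ u r) := rfl
    rw [this, psi_diff hρ0 hρ1 hreg hrIcc hsIcc, ← intervalIntegral.integral_smul]
    apply intervalIntegral.integral_congr
    intro θ _
    show (s - r)⁻¹ • wedge (u (crv s θ) - u (crv r θ)) (Vf ρ u s θ + Vf ρ u r θ)
      = wedge ((s - r)⁻¹ • (u (crv s θ) - u (crv r θ))) (Vf ρ u s θ + Vf ρ u r θ)
    rw [wedge_smul_left, smul_eq_mul]
  rw [Filter.tendsto_congr' heq]
  apply intervalIntegral.tendsto_integral_filter_of_dominated_convergence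
    (bound := fun _ => 2 * M * (M + M))
  · filter_upwards [hmem] with s hs
    rcases hs with ⟨hne, hsIoo⟩
    have hsIcc : s ∈ Icc ρ 1 := ⟨hsIoo.1.le, hsIoo.2.le⟩
    apply Continuous.aestronglyMeasurable
    exact continuous_wedge.comp
      ((((cont_ucrv_theta hρ0 hreg hsIcc).sub
        (cont_ucrv_theta hρ0 hreg hrIcc)).const_smul ((s - r)⁻¹ : ℝ)).prodMk
        ((cont_Vf_theta hρ0 hρ1 hreg hsIcc).add (cont_Vf_theta hρ0 hρ1 hreg hrIcc)))
  · filter_upwards [hmem] with s hs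
    rcases hs with ⟨hne, hsIoo⟩
    have hsIcc : s ∈ Icc ρ 1 := ⟨hsIoo.1.le, hsIoo.2.le⟩
    apply Filter.Eventually.of_forall
    intro θ _
    have hne' : s - r ≠ 0 := sub_ne_zero.mpr hne
    have h1 : ‖(s - r)⁻¹ • (u (crv s θ) - u (crv r θ))‖ ≤ M := by
      rw [norm_smul, norm_inv, Real.norm_eq_abs]
      calc |s - r|⁻¹ * ‖u (crv s θ) - u (crv r θ)‖ ≤ |s - r|⁻¹ * (M * |s - r|) := by
            apply mul_le_mul_of_nonneg_left (slope_bound hρ0 hreg hMG hrIcc hsIcc θ)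
            positivity
      _ = M := by field_simp
    have h2 : ‖Vf ρ u s θ + Vf ρ u r θ‖ ≤ M + M :=
      le_trans (norm_add_le _ _)
        (add_le_add (Vf_bound hρ0 hMG hsIcc θ) (Vf_bound hρ0 hMG hrIcc θ))
    rw [Real.norm_eq_abs]
    calc |wedge ((s - r)⁻¹ • (u (crv s θ) - u (crv r θ))) (Vf ρ u s θ + Vf ρ u r θ)|
        ≤ 2 * ‖(s - r)⁻¹ • (u (crv s θ) - u (crv r θ))‖
          * ‖Vf ρ u s θ + Vf ρ u r θ‖ := abs_wedge_le _ _
    _ ≤ 2 * M * (M + M) := by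
        have e1 : ‖(s - r)⁻¹ • (u (crv s θ) - u (crv r θ))‖
            = ‖(s - r)⁻¹ • (u (crv s θ) - u (crv r θ))‖ := rfl
        have e2 : ‖Vf ρ u s θ + Vf ρ u r θ‖
            = ‖Vf ρ u s θ + Vf ρ u r θ‖ := rfl
        rw [e1, e2]
        apply mul_le_mul _ h2 (norm_nonneg _) (by positivity)
        linarith [h1]
  · exact intervalIntegrable_const
  · apply Filter.Eventually.of_forall
    intro θ _
    have hle1 : l ≤ nhdsWithin r {r}ᶜ := nhdsWithin_mono r inter_subset_left
    have hle2 : l ≤ nhdsWithin r (Icc ρ 1) := by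
      apply nhdsWithin_mono
      intro x hx
      exact ⟨hx.2.1.le, hx.2.2.le⟩
    have hsl : Filter.Tendsto (fun s => (s - r)⁻¹ • (u (crv s θ) - u (crv r θ))) l
        (nhds (Rf ρ u r θ)) := by
      have := hasDerivAt_iff_tendsto_slope.mp (hasDerivAt_r hρ0 hreg hr θ)
      exact (this.mono_left hle1)
    have hVcont : Filter.Tendsto (fun s => Vf ρ u s θ) l (nhds (Vf ρ u r θ)) := by
      have hc : ContinuousOn (fun s : ℝ => Vf ρ u s θ) (Icc ρ 1) := by
        apply (contOn_Vf hρ0 hρ1 hreg).comp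
          (Continuous.continuousOn (by continuity : Continuous (fun s : ℝ => (s, θ))))
        intro x hx
        exact ⟨hx, mem_univ θ⟩
      exact (hc r hrIcc).mono_left hle2
    have hpair := hsl.prodMk_nhds (hVcont.add (tendsto_const_nhds (x := Vf ρ u r θ)))
    exact (continuous_wedge.tendsto _).comp hpair

lemma contOn_psiF (hρ0 : 0 < ρ) (hρ1 : ρ < 1) (hreg : ContDiffOn ℝ 1 u (cann ρ)) :
    ContinuousOn (psiF ρ u) (Icc ρ 1) := by
  obtain ⟨M, hM0, hMG, hMu⟩ := exists_bound hρ0 hρ1 hreg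
  intro r hrIcc
  unfold ContinuousWithinAt psiF
  apply intervalIntegral.tendsto_integral_filter_of_dominated_convergence
    (bound := fun _ => 2 * M * M)
  · apply Filter.Eventually.mono self_mem_nhdsWithin
    intro s hs
    exact (cont_Wf_theta hρ0 hρ1 hreg hs).aestronglyMeasurable
  · apply Filter.Eventually.mono self_mem_nhdsWithin
    intro s hs
    apply Filter.Eventually.of_forall
    intro θ _
    rw [Real.norm_eq_abs, Wf]
    calc |wedge (u (crv s θ)) (Vf ρ u s θ)|
        ≤ 2 * ‖u (crv s θ)‖ * ‖Vf ρ u s θ‖ := abs_wedge_le _ _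
    _ ≤ 2 * M * M := by
        have b1 : ‖u (crv s θ)‖ ≤ M := hMu _ (crv_mem_cann hρ0 hs θ)
        have b2 : ‖Vf ρ u s θ‖ ≤ M := Vf_bound hρ0 hMG hs θ
        have := norm_nonneg (u (crv s θ))
        have := norm_nonneg (Vf ρ u s θ)
        nlinarith
  · exact intervalIntegrable_const
  · apply Filter.Eventually.of_forall
    intro θ _
    have hc : ContinuousOn (fun s : ℝ => Wf ρ u s θ) (Icc ρ 1) := by
      apply (contOn_Wf hρ0 hρ1 hreg).comp
        (Continuous.continuousOn (by continuity : Continuous (fun s : ℝ => (s, θ))))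
      intro x hx
      exact ⟨hx, mem_univ θ⟩
    exact hc r hrIcc

lemma contOn_chiF (hρ0 : 0 < ρ) (hρ1 : ρ < 1) (hreg : ContDiffOn ℝ 1 u (cann ρ)) :
    ContinuousOn (chiF ρ u) (Icc ρ 1) := by
  obtain ⟨M, hM0, hMG, hMu⟩ := exists_bound hρ0 hρ1 hreg
  intro r hrIcc
  unfold ContinuousWithinAt chiF
  apply intervalIntegral.tendsto_integral_filter_of_dominated_convergence
    (bound := fun _ => 2 * M * M)
  · apply Filter.Eventually.mono self_mem_nhdsWithin
    intro s hs
    exact (continuous_wedge.comp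
      ((cont_Rf_theta hρ0 hρ1 hreg hs).prodMk (cont_Vf_theta hρ0 hρ1 hreg hs))).aestronglyMeasurable
  · apply Filter.Eventually.mono self_mem_nhdsWithin
    intro s hs
    apply Filter.Eventually.of_forall
    intro θ _
    rw [Real.norm_eq_abs]
    calc |wedge (Rf ρ u s θ) (Vf ρ u s θ)|
        ≤ 2 * ‖Rf ρ u s θ‖ * ‖Vf ρ u s θ‖ := abs_wedge_le _ _
    _ ≤ 2 * M * M := by
        have b1 : ‖Rf ρ u s θ‖ ≤ M := Rf_bound hρ0 hMG hs θ
        have b2 : ‖Vf ρ u s θ‖ ≤ M := Vf_bound hρ0 hMG hs θ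
        have := norm_nonneg (Rf ρ u s θ)
        have := norm_nonneg (Vf ρ u s θ)
        nlinarith
  · exact intervalIntegrable_const
  · apply Filter.Eventually.of_forall
    intro θ _
    have hc : ContinuousOn (fun s : ℝ => wedge (Rf ρ u s θ) (Vf ρ u s θ)) (Icc ρ 1) := by
      apply Continuous.comp_continuousOn (g := fun p : ℂ × ℂ => wedge p.1 p.2)
        (f := fun s => (Rf ρ u s θ, Vf ρ u s θ)) continuous_wedge
      apply ContinuousOn.prodMk
      · apply (contOn_Rf hρ0 hρ1 hreg).comp
          (Continuous.continuousOn (by continuity : Continuous (fun s : ℝ => (s, θ))))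
        intro x hx
        exact ⟨hx, mem_univ θ⟩
      · apply (contOn_Vf hρ0 hρ1 hreg).comp
          (Continuous.continuousOn (by continuity : Continuous (fun s : ℝ => (s, θ))))
        intro x hx
        exact ⟨hx, mem_univ θ⟩
    exact hc r hrIcc

lemma deriv_eq_two_chi (r : ℝ) :
    (∫ θ in (0:ℝ)..(2 * Real.pi), wedge (Rf ρ u r θ) (Vf ρ u r θ + Vf ρ u r θ))
      = 2 * chiF ρ u r := by
  rw [chiF, ← intervalIntegral.integral_const_mul]
  apply intervalIntegral.integral_congr
  intro θ _
  show wedge (Rf ρ u r θ) (Vf ρ u r θ + Vf ρ u r θ) = 2 * wedge (Rf ρ u r θ) (Vf ρ u r θ)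
  rw [wedge_add_right]
  ring

/-- FTC applied to `psiF` -/
lemma stokes_radial (hρ0 : 0 < ρ) (hρ1 : ρ < 1) (hreg : ContDiffOn ℝ 1 u (cann ρ)) :
    ∫ r in ρ..1, 2 * chiF ρ u r = psiF ρ u 1 - psiF ρ u ρ := by
  apply intervalIntegral.integral_eq_sub_of_hasDeriv_right_of_le hρ1.le
    (contOn_psiF hρ0 hρ1 hreg)
  · intro x hx
    have := hasDerivAt_psiF hρ0 hρ1 hreg hx
    rw [deriv_eq_two_chi] at this
    exact this.hasDerivWithinAt
  · apply ContinuousOn.intervalIntegrable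
    rw [uIcc_of_le hρ1.le]
    exact continuous_const.continuousOn.mul (contOn_chiF hρ0 hρ1 hreg)

/-! ### Polar change of variables -/

def Jf (ρ : ℝ) (u : ℂ → ℂ) (z : ℂ) : ℝ := wedge (Gd ρ u z 1) (Gd ρ u z Complex.I)

lemma contOn_Jf (hρ0 : 0 < ρ) (hρ1 : ρ < 1) (hreg : ContDiffOn ℝ 1 u (cann ρ)) :
    ContinuousOn (Jf ρ u) (cann ρ) := by
  apply Continuous.comp_continuousOn (g := fun p : ℂ × ℂ => wedge p.1 p.2)
    (f := fun z => (Gd ρ u z 1, Gd ρ u z Complex.I)) continuous_wedge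
  exact ((hGd_cont hρ0 hρ1 hreg).clm_apply continuousOn_const).prodMk
    ((hGd_cont hρ0 hρ1 hreg).clm_apply continuousOn_const)

lemma symm_eq_crv (p : ℝ × ℝ) : Complex.polarCoord.symm p = crv p.1 p.2 := by
  rw [Complex.polarCoord_symm_apply, crv]
  congr 1
  rw [mul_comm Complex.I, Complex.exp_mul_I]
  rw [Complex.ofReal_cos, Complex.ofReal_sin]

lemma wedge_RV (r θ : ℝ) :
    wedge (Rf ρ u r θ) (Vf ρ u r θ) = r * Jf ρ u (crv r θ) := by
  unfold Rf Vf Jf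
  have h1 : Complex.I * crv r θ = r • (Complex.I * Complex.exp (Complex.I * θ)) := by
    simp only [crv, Complex.real_smul]
    ring
  rw [h1, _root_.map_smul (Gd ρ u (crv r θ)), wedge_smul_right]
  congr 1
  exact wedge_rot (Gd ρ u (crv r θ)) θ

lemma chiF_eq (r : ℝ) :
    chiF ρ u r = ∫ θ in (0:ℝ)..(2 * Real.pi), r * Jf ρ u (crv r θ) := by
  unfold chiF
  apply intervalIntegral.integral_congr
  intro θ _
  exact wedge_RV r θ

lemma integrableOn_polarbox (hρ0 : 0 < ρ) (hρ1 : ρ < 1) (hreg : ContDiffOn ℝ 1 u (cann ρ)) :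
    IntegrableOn (fun p : ℝ × ℝ => p.1 * Jf ρ u (crv p.1 p.2))
      (Ioo ρ 1 ×ˢ Ioo (-Real.pi) Real.pi) volume := by
  have hcont : ContinuousOn (fun p : ℝ × ℝ => p.1 * Jf ρ u (crv p.1 p.2))
      (Icc ρ 1 ×ˢ Icc (-Real.pi) Real.pi) := by
    apply ContinuousOn.mul continuous_fst.continuousOn
    apply (contOn_Jf hρ0 hρ1 hreg).comp continuous_crv.continuousOn
    rintro ⟨r, θ⟩ ⟨hr, -⟩
    exact crv_mem_cann hρ0 hr θ
  exact (hcont.integrableOn_compact (isCompact_Icc.prod isCompact_Icc)).mono_set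
    (prod_mono Ioo_subset_Icc_self Ioo_subset_Icc_self)

lemma area_eq (hρ0 : 0 < ρ) (hρ1 : ρ < 1) (hreg : ContDiffOn ℝ 1 u (cann ρ)) :
    ∫ z in ann ρ, Jf ρ u z = ∫ r in ρ..1, chiF ρ u r := by
  have hπ := Real.pi_pos
  have key := Complex.integral_comp_polarCoord_symm ((ann ρ).indicator (Jf ρ u))
  rw [MeasureTheory.integral_indicator ann_open.measurableSet] at key
  rw [← key]
  have hset : EqOn (fun p : ℝ × ℝ => p.1 • (ann ρ).indicator (Jf ρ u) (Complex.polarCoord.symm p))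
      ((Ioo ρ 1 ×ˢ Ioo (-Real.pi) Real.pi).indicator
        (fun p : ℝ × ℝ => p.1 * Jf ρ u (crv p.1 p.2))) polarCoord.target := by
    rintro ⟨r, θ⟩ hp
    rw [polarCoord_target] at hp
    obtain ⟨hr0, hθ⟩ := hp
    have hr0' : (0:ℝ) < r := hr0
    have habs : ‖crv r θ‖ = r := crv_abs hr0'.le θ
    simp only [symm_eq_crv]
    by_cases h : crv r θ ∈ ann ρ
    · rw [indicator_of_mem h, indicator_of_mem]
      · exact smul_eq_mul _ _
      · exact ⟨⟨by rw [← habs]; exact h.1, by rw [← habs]; exact h.2⟩, hθ⟩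
    · rw [indicator_of_notMem h, indicator_of_notMem, smul_zero]
      intro hmem
      exact h ⟨by rw [habs]; exact hmem.1.1, by rw [habs]; exact hmem.1.2⟩
  rw [setIntegral_congr_fun (polarCoord.open_target.measurableSet) hset]
  rw [setIntegral_indicator ((measurableSet_Ioo).prod (measurableSet_Ioo))]
  have hinter : polarCoord.target ∩ (Ioo ρ 1 ×ˢ Ioo (-Real.pi) Real.pi)
      = Ioo ρ 1 ×ˢ Ioo (-Real.pi) Real.pi := by
    apply inter_eq_self_of_subset_right
    rintro ⟨r, θ⟩ ⟨hr, hθ⟩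
    rw [polarCoord_target]
    exact ⟨lt_trans hρ0 hr.1, hθ⟩
  rw [hinter]
  rw [Measure.volume_eq_prod, setIntegral_prod _ ?hint]
  case hint =>
    rw [← Measure.volume_eq_prod]
    exact integrableOn_polarbox hρ0 hρ1 hreg
  have hinner : ∀ r ∈ Ioo ρ 1, ∫ θ in Ioo (-Real.pi) Real.pi,
      r * Jf ρ u (crv r θ) = chiF ρ u r := by
    intro r hr
    have hper : Function.Periodic (fun θ => r * Jf ρ u (crv r θ)) (2 * Real.pi) := by
      intro θ
      simp only [crv_periodic]
    have h1 : ∫ θ in Ioo (-Real.pi) Real.pi, r * Jf ρ u (crv r θ)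
        = ∫ θ in (-Real.pi)..Real.pi, r * Jf ρ u (crv r θ) := by
      rw [intervalIntegral.integral_of_le (by linarith), integral_Ioc_eq_integral_Ioo]
    have h2 := hper.intervalIntegral_add_eq (-Real.pi) 0
    rw [show -Real.pi + 2 * Real.pi = Real.pi by ring] at h2
    rw [h1, h2, chiF_eq]
    norm_num
  calc ∫ r in Ioo ρ 1, ∫ θ in Ioo (-Real.pi) Real.pi, r * Jf ρ u (crv r θ)
      = ∫ r in Ioo ρ 1, chiF ρ u r :=
        setIntegral_congr_fun measurableSet_Ioo (fun r hr => hinner r hr)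
  _ = ∫ r in ρ..1, chiF ρ u r := by
      rw [intervalIntegral.integral_of_le hρ1.le, integral_Ioc_eq_integral_Ioo]

/-! ### Stokes -/

lemma stokes (hρ0 : 0 < ρ) (hρ1 : ρ < 1) (hreg : ContDiffOn ℝ 1 u (cann ρ)) :
    ∫ z in ann ρ, Jf ρ u z = Real.pi * (degCirc u 1 - degCirc u ρ) := by
  have hπ := Real.pi_pos
  have h1 : 1 ∈ Icc ρ 1 := ⟨hρ1.le, le_refl 1⟩
  have hρmem : ρ ∈ Icc ρ 1 := ⟨le_refl ρ, hρ1.le⟩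
  have hrad := stokes_radial hρ0 hρ1 hreg
  rw [intervalIntegral.integral_const_mul] at hrad
  rw [area_eq hρ0 hρ1 hreg, degCirc_eq hρ0 hreg h1, degCirc_eq hρ0 hreg hρmem]
  have hπne : (2 * Real.pi) ≠ 0 := by positivity
  field_simp
  linear_combination hrad

/-! ### Energy identities -/

def Pf (ρ : ℝ) (u : ℂ → ℂ) (z : ℂ) : ℂ := Gd ρ u z 1 + Complex.I * Gd ρ u z Complex.I
def Mf (ρ : ℝ) (u : ℂ → ℂ) (z : ℂ) : ℂ := Gd ρ u z 1 - Complex.I * Gd ρ u z Complex.I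

lemma idA (a b : ℂ) : ‖a‖ ^ 2 + ‖b‖ ^ 2
    = ‖a + Complex.I * b‖ ^ 2 + 2 * wedge a b := by
  rw [Complex.sq_norm, Complex.sq_norm, Complex.sq_norm]
  simp only [Complex.normSq_apply, wedge, Complex.add_re, Complex.add_im, Complex.mul_re,
    Complex.mul_im, Complex.I_re, Complex.I_im]
  ring

lemma idB (a b : ℂ) : ‖a‖ ^ 2 + ‖b‖ ^ 2
    = ‖a - Complex.I * b‖ ^ 2 - 2 * wedge a b := by
  rw [Complex.sq_norm, Complex.sq_norm, Complex.sq_norm]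
  simp only [Complex.normSq_apply, wedge, Complex.sub_re, Complex.sub_im, Complex.mul_re,
    Complex.mul_im, Complex.I_re, Complex.I_im]
  ring

lemma integrableOn_ann_of_contOn {f : ℂ → ℝ} (hρ0 : 0 < ρ)
    (hf : ContinuousOn f (cann ρ)) : IntegrableOn f (ann ρ) volume :=
  (hf.integrableOn_compact (isCompact_cann hρ0)).mono_set ann_subset_cann

lemma contOn_absPf (hρ0 : 0 < ρ) (hρ1 : ρ < 1) (hreg : ContDiffOn ℝ 1 u (cann ρ)) :
    ContinuousOn (fun z => ‖Pf ρ u z‖ ^ 2) (cann ρ) := by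
  apply ContinuousOn.pow
  apply continuous_norm.comp_continuousOn
  exact ((hGd_cont hρ0 hρ1 hreg).clm_apply continuousOn_const).add
    (continuousOn_const.mul ((hGd_cont hρ0 hρ1 hreg).clm_apply continuousOn_const))

lemma contOn_absMf (hρ0 : 0 < ρ) (hρ1 : ρ < 1) (hreg : ContDiffOn ℝ 1 u (cann ρ)) :
    ContinuousOn (fun z => ‖Mf ρ u z‖ ^ 2) (cann ρ) := by
  apply ContinuousOn.pow
  apply continuous_norm.comp_continuousOn
  exact ((hGd_cont hρ0 hρ1 hreg).clm_apply continuousOn_const).sub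
    (continuousOn_const.mul ((hGd_cont hρ0 hρ1 hreg).clm_apply continuousOn_const))

lemma contOn_sumsq (hρ0 : 0 < ρ) (hρ1 : ρ < 1) (hreg : ContDiffOn ℝ 1 u (cann ρ)) :
    ContinuousOn (fun z => ‖Gd ρ u z 1‖ ^ 2 + ‖Gd ρ u z Complex.I‖ ^ 2)
      (cann ρ) := by
  apply ContinuousOn.add
  · exact (continuous_norm.comp_continuousOn
      ((hGd_cont hρ0 hρ1 hreg).clm_apply continuousOn_const)).pow 2
  · exact (continuous_norm.comp_continuousOn
      ((hGd_cont hρ0 hρ1 hreg).clm_apply continuousOn_const)).pow 2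

lemma energy_eq_sumsq (hρ0 : 0 < ρ) (hρ1 : ρ < 1) (hreg : ContDiffOn ℝ 1 u (cann ρ)) :
    energy ρ u = (1 / 2) * ∫ z in ann ρ,
      (‖Gd ρ u z 1‖ ^ 2 + ‖Gd ρ u z Complex.I‖ ^ 2) := by
  rw [energy]
  congr 1
  apply setIntegral_congr_fun ann_open.measurableSet
  intro z hz
  have h := hGd_eq_fderiv hreg hz
  simp only [pdx, pdy, ← h]

lemma energy_plus (hρ0 : 0 < ρ) (hρ1 : ρ < 1) (hreg : ContDiffOn ℝ 1 u (cann ρ)) :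
    energy ρ u = (∫ z in ann ρ, Jf ρ u z)
      + (1 / 2) * ∫ z in ann ρ, ‖Pf ρ u z‖ ^ 2 := by
  rw [energy_eq_sumsq hρ0 hρ1 hreg]
  have hcongr : ∫ z in ann ρ,
      (‖Gd ρ u z 1‖ ^ 2 + ‖Gd ρ u z Complex.I‖ ^ 2)
      = ∫ z in ann ρ, (‖Pf ρ u z‖ ^ 2 + 2 * Jf ρ u z) := by
    apply setIntegral_congr_fun ann_open.measurableSet
    intro z _
    exact idA _ _
  rw [hcongr, MeasureTheory.integral_add
    (integrableOn_ann_of_contOn hρ0 (contOn_absPf hρ0 hρ1 hreg))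
    ((integrableOn_ann_of_contOn hρ0 (contOn_Jf hρ0 hρ1 hreg)).const_mul 2)]
  rw [MeasureTheory.integral_const_mul]
  ring

lemma energy_minus (hρ0 : 0 < ρ) (hρ1 : ρ < 1) (hreg : ContDiffOn ℝ 1 u (cann ρ)) :
    energy ρ u = -(∫ z in ann ρ, Jf ρ u z)
      + (1 / 2) * ∫ z in ann ρ, ‖Mf ρ u z‖ ^ 2 := by
  rw [energy_eq_sumsq hρ0 hρ1 hreg]
  have hcongr : ∫ z in ann ρ,
      (‖Gd ρ u z 1‖ ^ 2 + ‖Gd ρ u z Complex.I‖ ^ 2)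
      = ∫ z in ann ρ, (‖Mf ρ u z‖ ^ 2 - 2 * Jf ρ u z) := by
    apply setIntegral_congr_fun ann_open.measurableSet
    intro z _
    exact idB _ _
  rw [hcongr, MeasureTheory.integral_sub
    (integrableOn_ann_of_contOn hρ0 (contOn_absMf hρ0 hρ1 hreg))
    ((integrableOn_ann_of_contOn hρ0 (contOn_Jf hρ0 hρ1 hreg)).const_mul 2)]
  rw [MeasureTheory.integral_const_mul]
  ring

/-! ### Equality analysis -/

lemma vanish_of_integral_zero (hρ0 : 0 < ρ) {f : ℂ → ℝ} (hc : ContinuousOn f (cann ρ))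
    (hnn : ∀ z ∈ ann ρ, 0 ≤ f z) (hzero : ∫ z in ann ρ, f z = 0) :
    ∀ z ∈ ann ρ, f z = 0 := by
  have hint : IntegrableOn f (ann ρ) volume := integrableOn_ann_of_contOn hρ0 hc
  have hnn' : 0 ≤ᵐ[volume.restrict (ann ρ)] f := by
    filter_upwards [ae_restrict_mem ann_open.measurableSet] with x hx using hnn x hx
  have hae : f =ᵐ[volume.restrict (ann ρ)] 0 :=
    (setIntegral_eq_zero_iff_of_nonneg_ae hnn' hint).mp hzero
  have hm0 : volume.restrict (ann ρ) {x | f x ≠ 0} = 0 := by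
    have := hae
    rw [Filter.EventuallyEq, ae_iff] at this
    simpa using this
  intro z hz
  by_contra hne
  have hpos : 0 < f z := (hnn z hz).lt_of_ne (Ne.symm hne)
  set V := ann ρ ∩ f ⁻¹' (Ioi (f z / 2)) with hV
  have hVopen : IsOpen V :=
    ContinuousOn.isOpen_inter_preimage (hc.mono ann_subset_cann) ann_open isOpen_Ioi
  have hzV : z ∈ V := ⟨hz, by simp only [mem_preimage, mem_Ioi]; linarith⟩
  have hVpos : 0 < volume V := hVopen.measure_pos volume ⟨z, hzV⟩
  have hVsub : V ⊆ {x | f x ≠ 0} := by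
    rintro x ⟨hx1, hx2⟩
    simp only [mem_preimage, mem_Ioi] at hx2
    simp only [mem_setOf_eq]
    intro h0
    rw [h0] at hx2
    linarith
  have hVann : V ⊆ ann ρ := fun x hx => hx.1
  have : volume V = volume.restrict (ann ρ) V := by
    rw [Measure.restrict_apply hVopen.measurableSet, inter_eq_self_of_subset_left hVann]
  rw [this] at hVpos
  have : volume.restrict (ann ρ) V ≤ volume.restrict (ann ρ) {x | f x ≠ 0} :=
    measure_mono hVsub
  rw [hm0] at this
  exact absurd (le_antisymm this zero_le) (by simpa using hVpos.ne')

lemma Pf_zero_of_diffOn (hreg : ContDiffOn ℝ 1 u (cann ρ))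
    (h : DifferentiableOn ℂ u (ann ρ)) : ∀ z ∈ ann ρ, Pf ρ u z = 0 := by
  intro z hz
  have hd : DifferentiableAt ℂ u z := (h z hz).differentiableAt (ann_open.mem_nhds hz)
  have hF : HasFDerivAt u ((fderiv ℂ u z).restrictScalars ℝ) z :=
    hd.hasFDerivAt.restrictScalars ℝ
  have hGeq : Gd ρ u z = (fderiv ℂ u z).restrictScalars ℝ :=
    (hasFDerivAt_interior hreg hz).unique hF
  have hI : (fderiv ℂ u z) Complex.I = Complex.I * (fderiv ℂ u z) 1 := by
    conv_lhs => rw [show (Complex.I : ℂ) = Complex.I • (1 : ℂ) by simp]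
    rw [_root_.map_smul, smul_eq_mul]
  simp only [Pf, hGeq, ContinuousLinearMap.coe_restrictScalars', hI]
  have : Complex.I * (Complex.I * (fderiv ℂ u z) 1) = -((fderiv ℂ u z) 1) := by
    rw [← mul_assoc, Complex.I_mul_I, neg_one_mul]
  rw [this]
  ring

lemma diffOn_of_Pf_zero (hreg : ContDiffOn ℝ 1 u (cann ρ))
    (hP : ∀ z ∈ ann ρ, Pf ρ u z = 0) : DifferentiableOn ℂ u (ann ρ) := by
  intro z hz
  have hb : Gd ρ u z Complex.I = Complex.I * Gd ρ u z 1 := by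
    have h := hP z hz
    simp only [Pf] at h
    linear_combination (-Complex.I) * h + (Gd ρ u z Complex.I) * Complex.I_sq
  set c := Gd ρ u z 1 with hc
  set L : ℂ →L[ℂ] ℂ := c • (1 : ℂ →L[ℂ] ℂ) with hL
  have hres : L.restrictScalars ℝ = Gd ρ u z := by
    apply ContinuousLinearMap.ext
    intro w
    have hw : w = (w.re : ℂ) + (w.im : ℂ) * Complex.I := (Complex.re_add_im w).symm
    have hLw : (L.restrictScalars ℝ) w = c * w := by
      simp [hL, smul_eq_mul]
    rw [hLw]
    have hGdw : Gd ρ u z w = (w.re : ℂ) * c + (w.im : ℂ) * (Complex.I * c) := by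
      conv_lhs => rw [hw]
      have e1 : Gd ρ u z ((w.re : ℂ) + (w.im : ℂ) * Complex.I)
          = Gd ρ u z ((w.re : ℝ) • (1 : ℂ) + (w.im : ℝ) • Complex.I) := by
        norm_num [Complex.real_smul]
      rw [e1, map_add, _root_.map_smul, _root_.map_smul, ← hc, hb]
      simp [Complex.real_smul]
    rw [hGdw]
    conv_lhs => rw [hw]
    ring
  exact (hasFDerivAt_of_restrictScalars ℝ (hasFDerivAt_interior hreg hz)
    hres).differentiableAt.differentiableWithinAt

end Helpers

/-- `E(u) ≥ π|p − q|`, holomorphic maps realize `E(u) = π(p − q)`, and conversely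
equality (when `p ≥ q`) forces holomorphy. -/
theorem stmt4 (ρ : ℝ) (hρ0 : 0 < ρ) (hρ1 : ρ < 1) (u : ℂ → ℂ)
    (hreg : ContDiffOn ℝ 1 u (cann ρ))
    (hmod : ∀ z ∈ bdry ρ, ‖u z‖ = 1)
    (p q : ℝ) (hp : p = degCirc u 1) (hq : q = degCirc u ρ) :
    energy ρ u ≥ Real.pi * |p - q| ∧
    (DifferentiableOn ℂ u (ann ρ) → energy ρ u = Real.pi * (p - q)) ∧
    (q ≤ p → energy ρ u = Real.pi * (p - q) → DifferentiableOn ℂ u (ann ρ)) := by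
  have hπ := Real.pi_pos
  have hSJ : ∫ z in ann ρ, Jf ρ u z = Real.pi * (p - q) := by
    rw [stokes hρ0 hρ1 hreg, ← hp, ← hq]
  have hplus := energy_plus hρ0 hρ1 hreg
  have hminus := energy_minus hρ0 hρ1 hreg
  have hQPnn : 0 ≤ ∫ z in ann ρ, ‖Pf ρ u z‖ ^ 2 :=
    MeasureTheory.setIntegral_nonneg ann_open.measurableSet (fun z _ => sq_nonneg _)
  have hQMnn : 0 ≤ ∫ z in ann ρ, ‖Mf ρ u z‖ ^ 2 :=
    MeasureTheory.setIntegral_nonneg ann_open.measurableSet (fun z _ => sq_nonneg _)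
  refine ⟨?_, ?_, ?_⟩
  · rcases abs_cases (p - q) with ⟨h1, _⟩ | ⟨h1, _⟩
    · rw [h1]
      rw [hplus, hSJ] at *
      linarith
    · rw [h1, mul_neg]
      rw [hminus, hSJ] at *
      linarith
  · intro hdiff
    have hP0 := Pf_zero_of_diffOn hreg hdiff
    have hQP0 : ∫ z in ann ρ, ‖Pf ρ u z‖ ^ 2 = 0 := by
      rw [MeasureTheory.setIntegral_congr_fun ann_open.measurableSet
        (g := fun _ => (0:ℝ)) (fun z hz => by simp [hP0 z hz])]
      simp
    rw [hplus, hSJ, hQP0]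
    ring
  · intro hpq heq
    have hQP0 : ∫ z in ann ρ, ‖Pf ρ u z‖ ^ 2 = 0 := by
      rw [hplus, hSJ] at heq
      linarith
    have hvan := vanish_of_integral_zero hρ0 (contOn_absPf hρ0 hρ1 hreg)
      (fun z _ => sq_nonneg _) hQP0
    apply diffOn_of_Pf_zero hreg
    intro z hz
    have h2 := hvan z hz
    have : ‖Pf ρ u z‖ = 0 := by
      have := sq_eq_zero_iff.mp h2
      exact this
    exact (norm_eq_zero).mp this
end

section
/- Let 0 < ρ < 1, let p ≥ 1 be an integer and α ∈ ℂ with |α| = 1, and define ũ_p(z) = α(z^p − ρ^p·z̄^{−p})/(1 − ρ^p) for z ∈ Ā_ρ (so ũ_p(re^{iθ}) = α(r^p − ρ^p/r^p)e^{ipθ}/(1 − ρ^p)). Then Δũ_p = 0 on A_ρ, |ũ_p(z)| = 1 for all z ∈ ∂A_ρ, ũ_p(z) ∧ ∂_r ũ_p(z) = 0 for all z ∈ ∂A_ρ, and E(ũ_p) = 2πp(1 + ρ^p)/(1 − ρ^p), which is strictly greater than E(u_p) = 2πp(1 − ρ^p)/(1 + ρ^p), where u_p(z) = α(z^p + ρ^p·z̄^{−p})/(1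 + ρ^p). -/
open Complex MeasureTheory

noncomputable section
open Set

/-- general two-sided power map -/
def pmap (a b : ℂ) (n m : ℤ) : ℂ → ℂ := fun z => a * z ^ n + b * ((starRingEnd ℂ) z) ^ m

def pder (a b : ℂ) (n m : ℤ) (z : ℂ) : ℂ →L[ℝ] ℂ :=
  (a * n * z ^ (n - 1)) • (ContinuousLinearMap.id ℝ ℂ)
    + (b * m * ((starRingEnd ℂ) z) ^ (m - 1)) • (Complex.conjCLE : ℂ ≃L[ℝ] ℂ).toContinuousLinearMap

lemma pder_apply (a b : ℂ) (n m : ℤ) (z v : ℂ) :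
    pder a b n m z v = a * n * z ^ (n - 1) * v
      + b * m * ((starRingEnd ℂ) z) ^ (m - 1) * (starRingEnd ℂ) v := by
  simp [pder, Complex.conjCLE_apply, smul_eq_mul]

lemma hasFDerivAt_pmap (a b : ℂ) (n m : ℤ) {z : ℂ} (hz : z ≠ 0) :
    HasFDerivAt (pmap a b n m) (pder a b n m z) z := by
  have h1 : HasDerivAt (fun w : ℂ => a * w ^ n) (a * (n * z ^ (n - 1))) z :=
    (hasDerivAt_zpow n z (Or.inl hz)).const_mul a
  have h2 : HasDerivAt (fun w : ℂ => b * w ^ m) (b * (m * ((starRingEnd ℂ) z) ^ (m - 1)))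
      ((starRingEnd ℂ) z) :=
    (hasDerivAt_zpow m _ (Or.inl (by simpa using hz))).const_mul b
  have hc : HasFDerivAt (fun w : ℂ => (starRingEnd ℂ) w)
      (Complex.conjCLE : ℂ ≃L[ℝ] ℂ).toContinuousLinearMap z :=
    Complex.conjCLE.hasFDerivAt
  have h2' := (h2.hasFDerivAt.restrictScalars ℝ).comp z hc
  have h1' := h1.hasFDerivAt.restrictScalars ℝ
  have := h1'.add h2'
  refine this.congr_fderiv ?_
  ext v
  simp [pder, Complex.conjCLE_apply, smul_eq_mul, ContinuousLinearMap.smulRight]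
  ring

lemma fderiv_pmap {z : ℂ} (hz : z ≠ 0) (a b : ℂ) (n m : ℤ) :
    fderiv ℝ (pmap a b n m) z = pder a b n m z :=
  (hasFDerivAt_pmap a b n m hz).fderiv

lemma pdx_pmap {z : ℂ} (hz : z ≠ 0) (a b : ℂ) (n m : ℤ) :
    pdx (pmap a b n m) z = a * n * z ^ (n - 1) + b * m * ((starRingEnd ℂ) z) ^ (m - 1) := by
  rw [pdx, fderiv_pmap hz, pder_apply]; simp

lemma pdy_pmap {z : ℂ} (hz : z ≠ 0) (a b : ℂ) (n m : ℤ) :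
    pdy (pmap a b n m) z
      = a * n * z ^ (n - 1) * Complex.I - b * m * ((starRingEnd ℂ) z) ^ (m - 1) * Complex.I := by
  rw [pdy, fderiv_pmap hz, pder_apply]; simp; ring

lemma pdx_pmap_eventually {z : ℂ} (hz : z ≠ 0) (a b : ℂ) (n m : ℤ) :
    pdx (pmap a b n m) =ᶠ[nhds z] pmap (a * n) (b * m) (n - 1) (m - 1) := by
  filter_upwards [IsOpen.mem_nhds (isOpen_compl_singleton) hz] with w hw
  rw [pdx_pmap hw]; rfl

lemma pdy_pmap_eventually {z : ℂ} (hz : z ≠ 0) (a b : ℂ) (n m : ℤ) :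
    pdy (pmap a b n m) =ᶠ[nhds z] pmap (a * n * Complex.I) (-(b * m * Complex.I)) (n - 1) (m - 1) := by
  filter_upwards [IsOpen.mem_nhds (isOpen_compl_singleton) hz] with w hw
  rw [pdy_pmap hw]; simp [pmap]; ring

lemma laplacian_pmap {z : ℂ} (hz : z ≠ 0) (a b : ℂ) (n m : ℤ) :
    pdx (pdx (pmap a b n m)) z + pdy (pdy (pmap a b n m)) z = 0 := by
  have h1 : pdx (pdx (pmap a b n m)) z
      = pdx (pmap (a * n) (b * m) (n - 1) (m - 1)) z :=
    congrArg (fun L : ℂ →L[ℝ] ℂ => L 1) ((pdx_pmap_eventually hz a b n m).fderiv_eq)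
  have h2 : pdy (pdy (pmap a b n m)) z
      = pdy (pmap (a * n * Complex.I) (-(b * m * Complex.I)) (n - 1) (m - 1)) z :=
    congrArg (fun L : ℂ →L[ℝ] ℂ => L Complex.I) ((pdy_pmap_eventually hz a b n m).fderiv_eq)
  rw [h1, h2, pdx_pmap hz, pdy_pmap hz]
  push_cast
  ring_nf
  simp [Complex.I_sq]

lemma isOpen_ann (ρ : ℝ) : IsOpen (ann ρ) := by
  have : ann ρ = (fun z : ℂ => ‖z‖) ⁻¹' (Ioo ρ 1) := rfl
  rw [this]
  exact isOpen_Ioo.preimage continuous_norm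

lemma integral_ann_radial (ρ : ℝ) (hρ : 0 < ρ) (g : ℝ → ℝ) :
    ∫ z in ann ρ, g (‖z‖)
      = 2 * Real.pi * ∫ r in Ioo ρ 1, r * g r := by
  have h1 : ∫ z in ann ρ, g (‖z‖)
      = ∫ z : ℂ, (Ioo ρ 1).indicator g ‖z‖ := by
    rw [← integral_indicator (isOpen_ann ρ).measurableSet]
    refine integral_congr_ae (Filter.Eventually.of_forall fun z => ?_)
    simp only [Set.indicator_apply, Set.mem_setOf_eq, Set.mem_Ioo, ann]
  rw [h1, MeasureTheory.integral_fun_norm_addHaar volume ((Ioo ρ 1).indicator g)]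
  rw [Complex.finrank_real_complex]
  simp only [smul_eq_mul, nsmul_eq_mul]
  have hvol : volume.real (Metric.ball (0:ℂ) 1) = Real.pi := by
    rw [measureReal_def, Complex.volume_ball]
    simp [ENNReal.toReal_mul]
  rw [hvol]
  have h2 : ∫ y in Ioi (0:ℝ), y ^ (2 - 1) * (Ioo ρ 1).indicator g y
      = ∫ r in Ioo ρ 1, r * g r := by
    have : ∀ y : ℝ, y ^ (2 - 1) * (Ioo ρ 1).indicator g y
        = (Ioo ρ 1).indicator (fun r => r * g r) y := by
      intro y
      by_cases hy : y ∈ Ioo ρ 1 <;> simp [hy]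
    simp_rw [this]
    rw [setIntegral_indicator measurableSet_Ioo]
    congr 1
    rw [Set.inter_eq_right.mpr]
    intro y hy
    exact lt_trans hρ hy.1
  rw [h2]
  push_cast
  ring

lemma energy_pmap (ρ : ℝ) (hρ : 0 < ρ) (hρ1 : ρ < 1) (p : ℕ) (hp : 1 ≤ p) (a b : ℂ) :
    energy ρ (pmap a b (p : ℤ) (-(p : ℤ)))
      = Real.pi * p * (1 - ρ ^ (2*p)) * ((‖a‖) ^ 2 + (‖b‖) ^ 2 / ρ ^ (2*p)) := by
  set k₁ : ℤ := 2*(p:ℤ) - 2 with hk₁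
  set k₂ : ℤ := -(2*(p:ℤ)) - 2 with hk₂
  set c₁ : ℝ := 2 * (‖a‖ * p) ^ 2 with hc₁
  set c₂ : ℝ := 2 * (‖b‖ * p) ^ 2 with hc₂
  set g : ℝ → ℝ := fun r => c₁ * r ^ k₁ + c₂ * r ^ k₂ with hg
  have hEq : ∀ z ∈ ann ρ,
      (‖pdx (pmap a b (p:ℤ) (-(p:ℤ))) z‖) ^ 2
        + (‖pdy (pmap a b (p:ℤ) (-(p:ℤ))) z‖) ^ 2 = g (‖z‖) := by
    intro z hz
    have hz0 : z ≠ 0 := by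
      intro h
      rw [h] at hz
      simp only [ann, Set.mem_setOf_eq, norm_zero] at hz
      exact absurd hz.1 (not_lt.mpr hρ.le)
    rw [pdx_pmap hz0, pdy_pmap hz0]
    have e1 : ∀ A B : ℂ, (‖A + B‖) ^ 2
        + (‖A * Complex.I - B * Complex.I‖) ^ 2
        = 2 * (‖A‖) ^ 2 + 2 * (‖B‖) ^ 2 := by
      intro A B
      have h : A * Complex.I - B * Complex.I = (A - B) * Complex.I := by ring
      rw [h, norm_mul, Complex.norm_I, mul_one,
        Complex.sq_norm, Complex.sq_norm, Complex.sq_norm, Complex.sq_norm]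
      simp [Complex.normSq_apply]
      ring
    rw [e1]
    have eA : (‖a * (((p:ℤ)) : ℂ) * z ^ ((p:ℤ) - 1)‖) ^ 2
        = (‖a‖ * p) ^ 2 * (‖z‖) ^ k₁ := by
      rw [norm_mul, norm_mul, norm_zpow, mul_pow, mul_pow,
        ← zpow_natCast ((‖z‖) ^ ((p:ℤ) - 1)) 2, ← zpow_mul]
      rw [show ((p:ℤ) - 1) * (2:ℕ) = k₁ by rw [hk₁]; push_cast; ring]
      rw [show ‖((p:ℤ) : ℂ)‖ = (p:ℝ) from by simp]
      ring
    have eB : (‖b * (Int.cast (-(p:ℤ)) : ℂ) * ((starRingEnd ℂ) z) ^ (-(p:ℤ) - 1)‖) ^ 2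
        = (‖b‖ * p) ^ 2 * (‖z‖) ^ k₂ := by
      rw [norm_mul, norm_mul, norm_zpow, mul_pow, mul_pow,
        ← zpow_natCast ((‖(starRingEnd ℂ) z‖) ^ (-(p:ℤ) - 1)) 2, ← zpow_mul]
      rw [show (-(p:ℤ) - 1) * (2:ℕ) = k₂ by rw [hk₂]; push_cast; ring]
      rw [show ‖(Int.cast (-(p:ℤ)) : ℂ)‖ = (p:ℝ) from by simp,
        Complex.norm_conj]
      ring
    rw [eA, eB, hg]
    simp only [hc₁, hc₂]
    ring
  have hstep : energy ρ (pmap a b (p:ℤ) (-(p:ℤ)))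
      = (1/2) * ∫ z in ann ρ, g (‖z‖) := by
    rw [energy]
    congr 1
    exact setIntegral_congr_fun (isOpen_ann ρ).measurableSet hEq
  rw [hstep, integral_ann_radial ρ hρ g]
  have h0 : (0:ℝ) ∉ Set.uIcc ρ 1 := by
    rw [Set.uIcc_of_le hρ1.le]
    intro h
    exact absurd (Set.mem_Icc.mp h).1 (not_le.mpr hρ)
  have hiEq : ∀ r ∈ Ioo ρ 1, r * g r = c₁ * r ^ (k₁ + 1) + c₂ * r ^ (k₂ + 1) := by
    intro r hr
    have hr0 : r ≠ 0 := ne_of_gt (lt_trans hρ hr.1)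
    rw [hg]
    simp only
    rw [zpow_add₀ hr0, zpow_add₀ hr0, zpow_one]
    ring
  rw [setIntegral_congr_fun measurableSet_Ioo hiEq,
    ← MeasureTheory.integral_Ioc_eq_integral_Ioo,
    ← intervalIntegral.integral_of_le hρ1.le]
  have hi1 : IntervalIntegrable (fun r : ℝ => r ^ (k₁ + 1)) volume ρ 1 :=
    intervalIntegral.intervalIntegrable_zpow (Or.inr h0)
  have hi2 : IntervalIntegrable (fun r : ℝ => r ^ (k₂ + 1)) volume ρ 1 :=
    intervalIntegral.intervalIntegrable_zpow (Or.inr h0)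
  rw [intervalIntegral.integral_add (hi1.const_mul c₁) (hi2.const_mul c₂),
    intervalIntegral.integral_const_mul, intervalIntegral.integral_const_mul,
    integral_zpow (Or.inr ⟨by omega, h0⟩), integral_zpow (Or.inr ⟨by omega, h0⟩)]
  have e2 : k₁ + 1 + 1 = ((2*p : ℕ) : ℤ) := by rw [hk₁]; push_cast; ring
  have e3 : k₂ + 1 + 1 = -((2*p : ℕ) : ℤ) := by rw [hk₂]; push_cast; ring
  simp only [e2, e3, zpow_neg, zpow_natCast, one_pow, inv_one]
  have d1 : ((k₁ + 1 : ℤ) : ℝ) + 1 = 2*(p:ℝ) := by rw [hk₁]; push_cast; ring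
  have d2 : ((k₂ + 1 : ℤ) : ℝ) + 1 = -(2*(p:ℝ)) := by rw [hk₂]; push_cast; ring
  rw [d1, d2]
  have hρ2p : ρ ^ (2*p) ≠ 0 := pow_ne_zero _ (ne_of_gt hρ)
  have hpne : (p:ℝ) ≠ 0 := Nat.cast_ne_zero.mpr (by omega)
  rw [hc₁, hc₂]
  push_cast
  field_simp
  ring


lemma abs_ne_zero_of_circle {z : ℂ} {r : ℝ} (hr : 0 < r) (hz : ‖z‖ = r) : z ≠ 0 := by
  intro h
  rw [h, norm_zero] at hz
  exact absurd hz.symm (ne_of_gt hr)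

lemma conj_circle {z : ℂ} {r : ℝ} (hr : 0 < r) (hz : ‖z‖ = r) :
    (starRingEnd ℂ) z = ((r : ℂ)) ^ 2 / z := by
  have hz0 : z ≠ 0 := abs_ne_zero_of_circle hr hz
  rw [eq_div_iff hz0, mul_comm, Complex.mul_conj, Complex.normSq_eq_norm_sq, hz]
  push_cast
  ring

lemma conj_zpow_circle (p : ℕ) {z : ℂ} {r : ℝ} (hr : 0 < r) (hz : ‖z‖ = r) :
    ((starRingEnd ℂ) z) ^ (-(p : ℤ)) = z ^ p / ((r : ℂ)) ^ (2*p) := by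
  have hz0 : z ≠ 0 := abs_ne_zero_of_circle hr hz
  rw [conj_circle hr hz, zpow_neg, div_zpow, zpow_natCast, zpow_natCast, inv_div, ← pow_mul]

lemma rderiv_pmap (a b : ℂ) (n m : ℤ) {z : ℂ} (hz0 : z ≠ 0) :
    rderiv (pmap a b n m) z
      = (a * n * z ^ n + b * m * ((starRingEnd ℂ) z) ^ m) / ((‖z‖ : ℝ) : ℂ) := by
  have habs : ((‖z‖ : ℝ) : ℂ) ≠ 0 := by
    rw [Complex.ofReal_ne_zero]
    simpa using hz0
  have hcz : (starRingEnd ℂ) z ≠ 0 := by simpa using hz0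
  rw [rderiv, fderiv_pmap hz0, pder_apply, map_div₀, Complex.conj_ofReal]
  have e1 : z ^ (n - 1) * z = z ^ n := by
    rw [zpow_sub_one₀ hz0]
    field_simp
  have e2 : ((starRingEnd ℂ) z) ^ (m - 1) * (starRingEnd ℂ) z = ((starRingEnd ℂ) z) ^ m := by
    rw [zpow_sub_one₀ hcz]
    field_simp
  field_simp
  linear_combination (a * n) * e1 + (b * m) * e2

lemma pmap_val_circle (α : ℂ) (s t : ℝ) (p : ℕ) {z : ℂ} {r : ℝ} (hr : 0 < r)
    (hz : ‖z‖ = r) :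
    pmap (α * (s:ℂ)) (α * (t:ℂ)) (p:ℤ) (-(p:ℤ)) z
      = (((s + t / r ^ (2*p)) : ℝ) : ℂ) * (α * z ^ p) := by
  have hr0 : (r : ℂ) ≠ 0 := Complex.ofReal_ne_zero.mpr (ne_of_gt hr)
  simp only [pmap]
  rw [conj_zpow_circle p hr hz, zpow_natCast]
  push_cast
  field_simp

lemma rderiv_val_circle (α : ℂ) (s t : ℝ) (p : ℕ) {z : ℂ} {r : ℝ} (hr : 0 < r)
    (hz : ‖z‖ = r) :
    rderiv (pmap (α * (s:ℂ)) (α * (t:ℂ)) (p:ℤ) (-(p:ℤ))) z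
      = ((((p:ℝ) * (s - t / r ^ (2*p)) / r) : ℝ) : ℂ) * (α * z ^ p) := by
  have hz0 : z ≠ 0 := abs_ne_zero_of_circle hr hz
  have hr0 : (r : ℂ) ≠ 0 := Complex.ofReal_ne_zero.mpr (ne_of_gt hr)
  rw [rderiv_pmap _ _ _ _ hz0, conj_zpow_circle p hr hz, zpow_natCast, hz]
  push_cast
  field_simp
  ring

lemma wedge_parallel (c : ℂ) (u₁ u₂ : ℝ) : wedge ((u₁:ℂ) * c) ((u₂:ℂ) * c) = 0 := by
  simp only [wedge, Complex.mul_re, Complex.mul_im, Complex.ofReal_re, Complex.ofReal_im]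
  ring

lemma abs_form {α z : ℂ} {r : ℝ} (hα : ‖α‖ = 1) (hz : ‖z‖ = r)
    (u : ℝ) (p : ℕ) : ‖(u:ℂ) * (α * z ^ p)‖ = |u| * r ^ p := by
  rw [norm_mul, norm_mul, norm_pow, hα, hz, one_mul, Complex.norm_real, Real.norm_eq_abs]

lemma boundary_package (ρ : ℝ) (hρ0 : 0 < ρ) (hρ1 : ρ < 1) (p : ℕ)
    (α : ℂ) (hα : ‖α‖ = 1) (s t : ℝ)
    (h1 : |s + t| = 1) (h2 : |s + t / ρ ^ (2*p)| * ρ ^ p = 1) :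
    (∀ z ∈ bdry ρ, ‖pmap (α*(s:ℂ)) (α*(t:ℂ)) (p:ℤ) (-(p:ℤ)) z‖ = 1) ∧
    (∀ z ∈ bdry ρ,
      wedge (pmap (α*(s:ℂ)) (α*(t:ℂ)) (p:ℤ) (-(p:ℤ)) z)
        (rderiv (pmap (α*(s:ℂ)) (α*(t:ℂ)) (p:ℤ) (-(p:ℤ))) z) = 0) := by
  constructor
  · intro z hz
    rcases hz with hz | hz
    · rw [pmap_val_circle α s t p one_pos hz, abs_form hα hz, one_pow, one_pow, mul_one, div_one]
      exact h1
    · rw [pmap_val_circle α s t p hρ0 hz, abs_form hα hz]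
      exact h2
  · intro z hz
    rcases hz with hz | hz
    · rw [pmap_val_circle α s t p one_pos hz, rderiv_val_circle α s t p one_pos hz]
      exact wedge_parallel _ _ _
    · rw [pmap_val_circle α s t p hρ0 hz, rderiv_val_circle α s t p hρ0 hz]
      exact wedge_parallel _ _ _

end

/-- The radial map `ũ_p(z) = α(z^p − ρ^p z̄^{−p})/(1 − ρ^p)` is a solution of the semi-stiff
problem, with `E(ũ_p) = 2πp(1 + ρ^p)/(1 − ρ^p) > E(u_p) = 2πp(1 − ρ^p)/(1 + ρ^p)`. -/
theorem stmt10 (ρ : ℝ) (hρ0 : 0 < ρ) (hρ1 : ρ < 1)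
    (p : ℕ) (hp : 1 ≤ p) (α : ℂ) (hα : ‖α‖ = 1)
    (utild up : ℂ → ℂ)
    (hut : utild = fun z =>
      α * (z ^ p - (ρ : ℂ) ^ p * ((starRingEnd ℂ) z) ^ (-(p : ℤ))) / (1 - (ρ : ℂ) ^ p))
    (hup : up = fun z =>
      α * (z ^ p + (ρ : ℂ) ^ p * ((starRingEnd ℂ) z) ^ (-(p : ℤ))) / (1 + (ρ : ℂ) ^ p)) :
    (∀ z ∈ ann ρ, pdx (pdx utild) z + pdy (pdy utild) z = 0) ∧
    (∀ z ∈ bdry ρ, ‖utild z‖ = 1) ∧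
    (∀ z ∈ bdry ρ, wedge (utild z) (rderiv utild z) = 0) ∧
    energy ρ utild = 2 * Real.pi * (p : ℝ) * (1 + ρ ^ p) / (1 - ρ ^ p) ∧
    energy ρ up = 2 * Real.pi * (p : ℝ) * (1 - ρ ^ p) / (1 + ρ ^ p) ∧
    energy ρ utild > energy ρ up := by
  have hq0 : 0 < ρ ^ p := pow_pos hρ0 p
  have hq1 : ρ ^ p < 1 := pow_lt_one₀ hρ0.le hρ1 (by omega)
  have h1m : (0:ℝ) < 1 - ρ ^ p := by linarith
  have h1p : (0:ℝ) < 1 + ρ ^ p := by linarith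
  have h1m' : (1:ℝ) - ρ ^ p ≠ 0 := ne_of_gt h1m
  have h1p' : (1:ℝ) + ρ ^ p ≠ 0 := ne_of_gt h1p
  have hq0' : ρ ^ p ≠ 0 := ne_of_gt hq0
  have hC1 : ((1:ℂ) - (ρ:ℂ) ^ p) ≠ 0 := by
    have : ((1:ℂ) - (ρ:ℂ) ^ p) = (((1 - ρ ^ p : ℝ)) : ℂ) := by push_cast; ring
    rw [this]
    exact Complex.ofReal_ne_zero.mpr h1m'
  have hC2 : ((1:ℂ) + (ρ:ℂ) ^ p) ≠ 0 := by
    have : ((1:ℂ) + (ρ:ℂ) ^ p) = (((1 + ρ ^ p : ℝ)) : ℂ) := by push_cast; ring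
    rw [this]
    exact Complex.ofReal_ne_zero.mpr h1p'
  have hut' : utild = pmap (α * (((1/(1 - ρ ^ p) : ℝ)) : ℂ))
      (α * (((-(ρ ^ p)/(1 - ρ ^ p) : ℝ)) : ℂ)) (p:ℤ) (-(p:ℤ)) := by
    rw [hut]
    funext z
    simp only [pmap, zpow_natCast]
    generalize ((starRingEnd ℂ) z) ^ (-(p:ℤ)) = w
    push_cast
    field_simp
    ring
  have hup' : up = pmap (α * (((1/(1 + ρ ^ p) : ℝ)) : ℂ))
      (α * (((ρ ^ p/(1 + ρ ^ p) : ℝ)) : ℂ)) (p:ℤ) (-(p:ℤ)) := by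
    rw [hup]
    funext z
    simp only [pmap, zpow_natCast]
    generalize ((starRingEnd ℂ) z) ^ (-(p:ℤ)) = w
    push_cast
    field_simp
  have hb := boundary_package ρ hρ0 hρ1 p α hα (1/(1 - ρ ^ p)) (-(ρ ^ p)/(1 - ρ ^ p))
    (by rw [show 1/(1 - ρ ^ p) + -(ρ ^ p)/(1 - ρ ^ p) = 1 by field_simp; ring]; exact abs_one)
    (by
      have hρ2p : ρ ^ (2*p) = (ρ ^ p) ^ 2 := by rw [mul_comm, pow_mul]
      have : 1/(1 - ρ ^ p) + (-(ρ ^ p)/(1 - ρ ^ p))/ρ ^ (2*p) = -(1/ρ ^ p) := by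
        rw [hρ2p]
        field_simp
        ring
      rw [this, abs_neg, abs_of_pos (by positivity)]
      field_simp)
  have hρ2p : ρ ^ (2*p) = (ρ ^ p) ^ 2 := by rw [mul_comm, pow_mul]
  have hA : energy ρ utild = 2 * Real.pi * (p : ℝ) * (1 + ρ ^ p) / (1 - ρ ^ p) := by
    rw [hut', energy_pmap ρ hρ0 hρ1 p hp]
    rw [norm_mul, norm_mul, hα, one_mul, one_mul, Complex.norm_real, Complex.norm_real, Real.norm_eq_abs, Real.norm_eq_abs,
      _root_.sq_abs, _root_.sq_abs, hρ2p]
    field_simp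
    ring
  have hB : energy ρ up = 2 * Real.pi * (p : ℝ) * (1 - ρ ^ p) / (1 + ρ ^ p) := by
    rw [hup', energy_pmap ρ hρ0 hρ1 p hp]
    rw [norm_mul, norm_mul, hα, one_mul, one_mul, Complex.norm_real, Complex.norm_real, Real.norm_eq_abs, Real.norm_eq_abs,
      _root_.sq_abs, _root_.sq_abs, hρ2p]
    field_simp
    ring
  have hppos : (0:ℝ) < p := by
    have : (1:ℝ) ≤ (p:ℝ) := by exact_mod_cast hp
    linarith
  refine ⟨?_, ?_, ?_, hA, hB, ?_⟩
  · intro z hz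
    have hz0 : z ≠ 0 := by
      intro h
      rw [h] at hz
      simp only [ann, Set.mem_setOf_eq, norm_zero] at hz
      exact absurd hz.1 (not_lt.mpr hρ0.le)
    rw [hut']
    exact laplacian_pmap hz0 _ _ _ _
  · rw [hut']
    exact hb.1
  · rw [hut']
    exact hb.2
  · rw [hA, hB, gt_iff_lt, div_lt_div_iff₀ h1p h1m]
    nlinarith [mul_pos (mul_pos Real.pi_pos hppos) hq0]
end
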